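/- arXiv:2203.07557 — 8 statements merged into one kernel-verified Lean document; each statement's English description precedes it below -/
import Mathlib

section
/- Let n, d ≥ 1 and p ≥ 1 be integers, and let t_1, …, t_n ∈ ℝ. Let A ∈ ℝ^{n×d} be the Vandermonde matrix with rows a_i = (1, t_i, t_i^2, …, t_i^{d-1}), and let M ∈ ℝ^{n×(p(d-1)+1)} be the Vandermonde matrix with rows m_i = (1, t_i, t_i^2, …, t_i^{p(d-1)}). Then there exists a function f : ℝ^d → ℝ^{p(d-1)+1}, independent of i, such that for every i ∈ {1,…,n} and every x ∈ ℝ^d, ⟨a_i, x⟩^p = ⟨m_i, f(x)⟩, and consequently |⟨a_i, x⟩|^p = |⟨m_i, f(x)⟩|. Hence the rank of the ℓ_p regression problem on a Vandermonde matrix A ∈ ℝ^{n×d} is at most p(d-1)+1 = O(dp). -/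
/-- The rank of the ℓ_p regression problem on a Vandermonde matrix
`A ∈ ℝ^{n×d}` is at most `p(d-1)+1 = O(dp)`: with `M` the Vandermonde matrix
on the same bases with `p(d-1)+1` columns, there is a fixed function `f`
(independent of `i`) with `⟨a_i, x⟩^p = ⟨m_i, f(x)⟩` and hence
`|⟨a_i, x⟩|^p = |⟨m_i, f(x)⟩|` for all `i` and all `x`. -/
theorem vandermonde_lp_regression_rank (n d p : ℕ)
    (hn : 1 ≤ n) (hd : 1 ≤ d) (hp : 1 ≤ p)
    (t : Fin n → ℝ)
    (A : Matrix (Fin n) (Fin d) ℝ) (hA : ∀ i j, A i j = t i ^ (j : ℕ))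
    (M : Matrix (Fin n) (Fin (p * (d - 1) + 1)) ℝ)
    (hM : ∀ i k, M i k = t i ^ (k : ℕ)) :
    ∃ f : (Fin d → ℝ) → (Fin (p * (d - 1) + 1) → ℝ),
      ∀ (i : Fin n) (x : Fin d → ℝ),
        ((∑ j, A i j * x j) ^ p = ∑ k, M i k * f x k) ∧
        |∑ j, A i j * x j| ^ p = |∑ k, M i k * f x k| := by
  classical
  set q : (Fin d → ℝ) → Polynomial ℝ :=
    fun x => (∑ j : Fin d, Polynomial.C (x j) * Polynomial.X ^ (j : ℕ)) ^ p
  refine ⟨fun x k => (q x).coeff k, fun i x => ?_⟩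
  have hdeg : ∀ x, (q x).natDegree < p * (d - 1) + 1 := by
    intro x
    have h1 : (∑ j : Fin d, Polynomial.C (x j) * Polynomial.X ^ (j : ℕ)).natDegree ≤ d - 1 := by
      apply Polynomial.natDegree_sum_le_of_forall_le
      intro j _
      calc (Polynomial.C (x j) * Polynomial.X ^ (j : ℕ)).natDegree
          ≤ (Polynomial.X ^ (j : ℕ) : Polynomial ℝ).natDegree :=
            Polynomial.natDegree_C_mul_le (x j) _
        _ = (j : ℕ) := Polynomial.natDegree_X_pow _
        _ ≤ d - 1 := Nat.le_sub_one_of_lt j.isLt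
    have h2 : (q x).natDegree ≤ p * (d - 1) := by
      calc (q x).natDegree ≤ p * (∑ j : Fin d, Polynomial.C (x j) * Polynomial.X ^ (j : ℕ)).natDegree :=
            Polynomial.natDegree_pow_le
        _ ≤ p * (d - 1) := Nat.mul_le_mul_left p h1
    omega
  have hmain : (∑ j, A i j * x j) ^ p = ∑ k, M i k * (q x).coeff k := by
    have heval : (q x).eval (t i) = (∑ j, A i j * x j) ^ p := by
      simp only [q, Polynomial.eval_pow, Polynomial.eval_finset_sum, Polynomial.eval_mul,
        Polynomial.eval_C, Polynomial.eval_pow, Polynomial.eval_X]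
      congr 1
      exact Finset.sum_congr rfl fun j _ => by rw [hA]; ring
    rw [← heval, Polynomial.eval_eq_sum_range' (hdeg x)]
    rw [Finset.sum_range fun k => (q x).coeff k * t i ^ k]
    exact Finset.sum_congr rfl fun k _ => by rw [hM]; ring
  refine ⟨hmain, ?_⟩
  rw [← abs_pow, hmain]
end

section
/- Let n, d ≥ 1, 1 ≤ s ≤ d, and p ≥ 0 be integers, and let a_1, …, a_n ∈ ℝ^d be vectors each having at most s nonzero entries. Set T = C(d,s) · s^p, where C(d,s) is the binomial coefficient. Then there exist a matrix M ∈ ℝ^{n×T} with rows m_1, …, m_n and a function f : ℝ^d → ℝ^T, with f independent of i, such that for every i ∈ {1,…,n} and every x ∈ ℝ^d, ⟨a_i, x⟩^p = ⟨m_i, f(x)⟩. In particular, the rank of the ℓ_p regression problem on an s-sparse matrix A ∈ ℝ^{n×d} is at most C(d,s) · s^p = O(d^s s^p). -/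
/-- If each row `a_i ∈ ℝ^d` has at most `s` nonzero entries
(`1 ≤ s ≤ d`), then with `T = C(d,s)·s^p` there exist a matrix `M ∈ ℝ^{n×T}`
and a function `f : ℝ^d → ℝ^T` (independent of `i`) such that
`⟨a_i, x⟩^p = ⟨m_i, f(x)⟩` for all `i` and `x`. In particular the rank of the
ℓ_p regression problem on an `s`-sparse matrix is at most `C(d,s)·s^p`. -/
theorem sparse_lp_regression_rank (n d s p : ℕ)
    (hn : 1 ≤ n) (hs : 1 ≤ s) (hsd : s ≤ d)
    (a : Fin n → (Fin d → ℝ))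
    (ha : ∀ i, (Finset.univ.filter fun j => a i j ≠ 0).card ≤ s) :
    ∃ (M : Fin n → Fin (Nat.choose d s * s ^ p) → ℝ)
      (f : (Fin d → ℝ) → Fin (Nat.choose d s * s ^ p) → ℝ),
      ∀ (i : Fin n) (x : Fin d → ℝ),
        (∑ j, a i j * x j) ^ p = ∑ kk, M i kk * f x kk := by
  classical
  -- choose for each row a superset of its support of size exactly s
  have hch : ∀ i, ∃ S : Finset (Fin d),
      (Finset.univ.filter fun j => a i j ≠ 0) ⊆ S ∧ S.card = s := by
    intro i
    exact Finset.exists_superset_card_eq (ha i) (by simpa using hsd)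
  choose S hSsub hScard using hch
  -- the index type
  let I := {T : Finset (Fin d) // T.card = s} × (Fin p → Fin s)
  have hcard : Fintype.card I = Nat.choose d s * s ^ p := by
    simp [I, Fintype.card_finset_len, Fintype.card_fun]
  let e : Fin (Nat.choose d s * s ^ p) ≃ I := (Fintype.equivFinOfCardEq hcard).symm
  let emb : {T : Finset (Fin d) // T.card = s} → Fin s → Fin d :=
    fun T j => T.1.orderEmbOfFin T.2 j
  refine ⟨fun i kk =>
      (if (e kk).1 = ⟨S i, hScard i⟩ then (1 : ℝ) else 0) *
        ∏ k, a i (emb (e kk).1 ((e kk).2 k)),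
    fun x kk => ∏ k, x (emb (e kk).1 ((e kk).2 k)), ?_⟩
  intro i x
  beta_reduce
  rw [Equiv.sum_comp e (fun q : I =>
      (if q.1 = ⟨S i, hScard i⟩ then (1 : ℝ) else 0) *
        (∏ k, a i (emb q.1 (q.2 k))) * ∏ k, x (emb q.1 (q.2 k)))]
  · rw [Fintype.sum_prod_type]
    rw [Finset.sum_eq_single (⟨S i, hScard i⟩ : {T : Finset (Fin d) // T.card = s})]
    · simp only [eq_self_iff_true, if_true, one_mul]
      have key : ∀ t : Fin p → Fin s,
          (∏ k, a i (emb ⟨S i, hScard i⟩ (t k))) * ∏ k, x (emb ⟨S i, hScard i⟩ (t k))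
            = ∏ k, (fun j => a i (emb ⟨S i, hScard i⟩ j) * x (emb ⟨S i, hScard i⟩ j)) (t k) := by
        intro t
        rw [← Finset.prod_mul_distrib]
      rw [Finset.sum_congr rfl fun t _ => key t]
      have expand : (∑ j : Fin s, a i (emb ⟨S i, hScard i⟩ j) * x (emb ⟨S i, hScard i⟩ j)) ^ p
          = ∑ t : Fin p → Fin s, ∏ k,
              (fun j => a i (emb ⟨S i, hScard i⟩ j) * x (emb ⟨S i, hScard i⟩ j)) (t k) := by
        have h := Finset.prod_univ_sum (fun _ : Fin p => (Finset.univ : Finset (Fin s)))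
          (fun _ j => a i (emb ⟨S i, hScard i⟩ j) * x (emb ⟨S i, hScard i⟩ j))
        simpa [Finset.prod_const] using h
      rw [← expand]
      congr 1
      -- sum over Fin s via the embedding equals sum over S i, equals full sum
      have h1 : ∑ j : Fin s, a i (emb ⟨S i, hScard i⟩ j) * x (emb ⟨S i, hScard i⟩ j)
          = ∑ j ∈ S i, a i j * x j := by
        rw [← Finset.sum_attach (S i) (fun j => a i j * x j)]
        refine Finset.sum_bij (fun j _ => (⟨emb ⟨S i, hScard i⟩ j,
          Finset.orderEmbOfFin_mem _ _ _⟩ : {x // x ∈ S i})) (fun _ _ => Finset.mem_attach _ _)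
          ?_ ?_ ?_
        · intro j₁ _ j₂ _ h
          have h' : Finset.orderEmbOfFin (S i) (hScard i) j₁
              = Finset.orderEmbOfFin (S i) (hScard i) j₂ := congrArg Subtype.val h
          exact (Finset.orderEmbOfFin (S i) (hScard i)).injective h'
        · intro b _
          obtain ⟨j, hj⟩ := (Finset.range_orderEmbOfFin (S i) (hScard i) ▸ b.2 : (b : Fin d) ∈
            Set.range (Finset.orderEmbOfFin (S i) (hScard i)))
          exact ⟨j, Finset.mem_univ j, Subtype.ext hj⟩
        · intro j _; rfl
      rw [h1]
      refine (Finset.sum_subset (Finset.subset_univ (S i)) ?_).symm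
      intro j _ hj
      have : a i j = 0 := by
        by_contra h
        exact hj (hSsub i (Finset.mem_filter.mpr ⟨Finset.mem_univ j, h⟩))
      simp [this]
    · intro b _ hb
      simp [if_neg hb]
    · intro h
      exact absurd (Finset.mem_univ _) h
end

section
/- Let n, d, k ≥ 1, 1 ≤ s ≤ d, and p ≥ 0 be integers. Let v_1, …, v_k ∈ ℝ^d, and suppose that each row a_i ∈ ℝ^d of a matrix A ∈ ℝ^{n×d} can be written as a_i = κ_i + σ_i, where κ_i lies in the span of v_1, …, v_k and σ_i has at most s nonzero entries. Set T = C(d,s) · (k+s)^p, where C(d,s) is the binomial coefficient. Then there exist a matrix M ∈ ℝ^{n×T} with rows m_1, …, m_n and a function f : ℝ^d → ℝ^T, with f independent of i, such that for every i ∈ {1,…,n} and every x ∈ ℝ^d, ⟨a_i, x⟩^p = ⟨m_i, f(x)⟩. In particular, the rank of the ℓ_p regression problem on the sum of a rank-k matrix and an s-sparse matrix is at most C(d,s) · (k+s)^p. -/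
/-- If each row `a_i = κ_i + σ_i` where `κ_i` lies in the span of
`v_1, …, v_k` and `σ_i` has at most `s` nonzero entries, then with
`T = C(d,s)·(k+s)^p` there exist a matrix `M ∈ ℝ^{n×T}` and a function
`f : ℝ^d → ℝ^T` (independent of `i`) with `⟨a_i, x⟩^p = ⟨m_i, f(x)⟩` for all
`i, x`. In particular the rank of the ℓ_p regression problem on the sum of a
rank-`k` matrix and an `s`-sparse matrix is at most `C(d,s)·(k+s)^p`. -/
theorem lowrank_plus_sparse_lp_regression_rank (n d k s p : ℕ)
    (hn : 1 ≤ n) (hk : 1 ≤ k) (hs : 1 ≤ s) (hsd : s ≤ d)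
    (v : Fin k → (Fin d → ℝ))
    (a κ σ : Fin n → (Fin d → ℝ))
    (hsum : ∀ i, a i = κ i + σ i)
    (hκ : ∀ i, κ i ∈ Submodule.span ℝ (Set.range v))
    (hσ : ∀ i, (Finset.univ.filter fun j => σ i j ≠ 0).card ≤ s) :
    ∃ (M : Fin n → Fin (Nat.choose d s * (k + s) ^ p) → ℝ)
      (f : (Fin d → ℝ) → Fin (Nat.choose d s * (k + s) ^ p) → ℝ),
      ∀ (i : Fin n) (x : Fin d → ℝ),
        (∑ j, a i j * x j) ^ p = ∑ kk, M i kk * f x kk := by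
  classical
  -- choose supersets of supports of size exactly s
  have hS : ∀ i, ∃ t : Finset (Fin d),
      (Finset.univ.filter fun j => σ i j ≠ 0) ⊆ t ∧ t.card = s := by
    intro i
    obtain ⟨t, ht, htc⟩ := Finset.exists_superset_card_eq (hσ i)
      (by simpa using hsd)
    exact ⟨t, ht, htc⟩
  choose S hSsub hScard using hS
  -- choose coefficients of κ i in span of v
  choose c hc using fun i => (Submodule.mem_span_range_iff_exists_fun ℝ).mp (hκ i)
  -- index type
  set Q := {t : Finset (Fin d) // t.card = s} with hQ
  set Idx := Q × (Fin p → Fin (k + s)) with hIdx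
  -- enumeration of a set
  let emb : Q → Fin s → Fin d := fun q t => (q.1.orderIsoOfFin q.2 t : Fin d)
  -- base functions
  let base : Q → Fin (k + s) → (Fin d → ℝ) → ℝ := fun q j x =>
    Sum.elim (fun l => ∑ m, v l m * x m) (fun t => x (emb q t))
      (finSumFinEquiv.symm j)
  let Si : Fin n → Q := fun i => ⟨S i, hScard i⟩
  let coef : Fin n → Fin (k + s) → ℝ := fun i j =>
    Sum.elim (fun l => c i l) (fun t => σ i (emb (Si i) t))
      (finSumFinEquiv.symm j)
  -- key linear identity
  have key : ∀ (i : Fin n) (x : Fin d → ℝ),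
      (∑ j, a i j * x j) = ∑ jj, coef i jj * base (Si i) jj x := by
    intro i x
    have hsplit : ∑ jj, coef i jj * base (Si i) jj x
        = (∑ l : Fin k, c i l * (∑ m, v l m * x m))
          + ∑ t : Fin s, σ i (emb (Si i) t) * x (emb (Si i) t) := by
      rw [← Equiv.sum_comp finSumFinEquiv
        (fun jj => coef i jj * base (Si i) jj x), Fintype.sum_sum_type]
      simp [coef, base]
    rw [hsplit, hsum i]
    have h1 : ∑ j, (κ i j + σ i j) * x j
        = (∑ j, κ i j * x j) + ∑ j, σ i j * x j := by
      rw [← Finset.sum_add_distrib]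
      exact Finset.sum_congr rfl fun j _ => by ring
    have h2 : ∑ j, κ i j * x j = ∑ l : Fin k, c i l * (∑ m, v l m * x m) := by
      have : κ i = fun j => ∑ l, c i l * v l j := by
        rw [← hc i]; ext j; simp [Finset.sum_apply]
      rw [this]
      calc ∑ j, (∑ l, c i l * v l j) * x j
          = ∑ j, ∑ l, c i l * (v l j * x j) := by
            simp [Finset.sum_mul, mul_assoc]
        _ = ∑ l, ∑ j, c i l * (v l j * x j) := Finset.sum_comm
        _ = ∑ l : Fin k, c i l * (∑ m, v l m * x m) := by
            simp [Finset.mul_sum]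
    have h3 : ∑ j, σ i j * x j
        = ∑ t : Fin s, σ i (emb (Si i) t) * x (emb (Si i) t) := by
      have hzero : ∀ j ∈ Finset.univ, j ∉ S i → σ i j * x j = 0 := by
        intro j _ hj
        have : σ i j = 0 := by
          by_contra h
          exact hj (hSsub i (by simp [h]))
        simp [this]
      rw [← Finset.sum_subset (Finset.subset_univ (S i)) hzero]
      rw [← Finset.sum_coe_sort (S i) (fun j => σ i j * x j)]
      rw [← Equiv.sum_comp ((S i).orderIsoOfFin (hScard i)).toEquiv
        (fun j : S i => σ i (j : Fin d) * x (j : Fin d))]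
      rfl
    simp [Pi.add_apply] at h1 ⊢
    rw [h1, h2, h3]
  -- the M and f over the index type Idx
  let M' : Fin n → Idx → ℝ := fun i q =>
    if q.1 = Si i then ∏ t : Fin p, coef i (q.2 t) else 0
  let f' : (Fin d → ℝ) → Idx → ℝ := fun x q => ∏ t : Fin p, base q.1 (q.2 t) x
  have main : ∀ (i : Fin n) (x : Fin d → ℝ),
      (∑ j, a i j * x j) ^ p = ∑ q : Idx, M' i q * f' x q := by
    intro i x
    rw [key i x]
    have expand : (∑ jj, coef i jj * base (Si i) jj x) ^ p
        = ∑ g : Fin p → Fin (k + s), ∏ t : Fin p,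
            (coef i (g t) * base (Si i) (g t) x) := by
      rw [show (∑ jj, coef i jj * base (Si i) jj x) ^ p
          = ∏ _t : Fin p, ∑ jj, coef i jj * base (Si i) jj x from by simp,
        Finset.prod_univ_sum
        (fun _ : Fin p => (Finset.univ : Finset (Fin (k + s))))
        (fun _ jj => coef i jj * base (Si i) jj x)]
      simp [Fintype.piFinset_univ]
    rw [expand]
    rw [Fintype.sum_prod_type]
    rw [Finset.sum_eq_single (Si i)]
    · apply Finset.sum_congr rfl
      intro g _
      simp only [M', f', if_pos rfl]
      rw [← Finset.prod_mul_distrib]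
    · intro q _ hq
      apply Finset.sum_eq_zero
      intro g _
      simp [M', f', hq]
    · intro h
      exact absurd (Finset.mem_univ (Si i)) h
  -- transport along an equivalence Idx ≃ Fin T
  have hcard : Fintype.card Idx = Nat.choose d s * (k + s) ^ p := by
    rw [Fintype.card_prod, Fintype.card_finset_len, Fintype.card_fun]
    simp
  let e := Fintype.equivFinOfCardEq hcard
  refine ⟨fun i kk => M' i (e.symm kk), fun x kk => f' x (e.symm kk), ?_⟩
  intro i x
  rw [main i x, ← Equiv.sum_comp e.symm (fun q => M' i q * f' x q)]
end

section
/- Let n, d ≥ 1, 1 ≤ s ≤ d, and p ≥ 0 be integers, and let t_1, …, t_n ∈ ℝ. Suppose each row a_i ∈ ℝ^d of a matrix A ∈ ℝ^{n×d} can be written as a_i = v_i + σ_i, where v_i = (1, t_i, t_i^2, …, t_i^{d-1}) is a Vandermonde row and σ_i ∈ ℝ^d has at most s nonzero entries. Set T = (p+1) · (p(d-1)+1) · C(d,s) · s^p, where C(d,s) is the binomial coefficient. Then there exist a matrix M ∈ ℝ^{n×T} with rows m_1, …, m_n and a function f : ℝ^d → ℝ^T, with f independent of i, such that for every i ∈ {1,…,n}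 and every x ∈ ℝ^d, ⟨a_i, x⟩^p = ⟨m_i, f(x)⟩. In particular, the rank of the ℓ_p regression problem on the sum of a Vandermonde matrix and an s-sparse matrix is at most (p+1)(p(d-1)+1) · C(d,s) · s^p. -/
open Finset Polynomial

lemma filter_lt_card (p q : ℕ) (hq : q ≤ p) :
    ((Finset.univ : Finset (Fin p)).filter fun l : Fin p => (l:ℕ) < q).card = q := by
  have : ((Finset.univ : Finset (Fin p)).filter fun l : Fin p => (l:ℕ) < q)
      = (Finset.range q).attachFin (fun m hm => lt_of_lt_of_le (Finset.mem_range.mp hm) hq) := by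
    ext l
    simp [Finset.mem_attachFin]
  rw [this, Finset.card_attachFin, Finset.card_range]

lemma expand_pow (p q s : ℕ) (hq : q ≤ p) (hs : 1 ≤ s) (h : Fin s → ℝ) :
    (∑ w, h w) ^ q
      = ∑ g : Fin p → Fin s, ∏ l : Fin p, (if (l:ℕ) < q then h (g l) else (s:ℝ)⁻¹) := by
  have hsne : (s:ℝ) ≠ 0 := by positivity
  have key : (∏ l : Fin p, ∑ w : Fin s, if (l:ℕ) < q then h w else (s:ℝ)⁻¹)
      = ∑ g : Fin p → Fin s, ∏ l : Fin p, (if (l:ℕ) < q then h (g l) else (s:ℝ)⁻¹) :=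
    Fintype.prod_sum _
  rw [← key]
  have : ∀ l : Fin p, (∑ w : Fin s, if (l:ℕ) < q then h w else (s:ℝ)⁻¹)
      = if (l:ℕ) < q then (∑ w, h w) else 1 := by
    intro l
    split_ifs with hl
    · rfl
    · simp [Finset.sum_const, mul_inv_cancel₀ hsne]
  simp_rw [this]
  rw [Finset.prod_ite, Finset.prod_const, Finset.prod_const, one_pow, mul_one,
    filter_lt_card p q hq]

set_option maxHeartbeats 1000000 in
set_option synthInstance.maxHeartbeats 400000 in
/-- If each row `a_i = v_i + σ_i` where `v_i = (1, t_i, …, t_i^{d-1})`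
is a Vandermonde row and `σ_i` has at most `s` nonzero entries, then with
`T = (p+1)·(p(d-1)+1)·C(d,s)·s^p` there exist a matrix `M ∈ ℝ^{n×T}` and a
function `f : ℝ^d → ℝ^T` (independent of `i`) with `⟨a_i, x⟩^p = ⟨m_i, f(x)⟩`
for all `i, x`. In particular the rank of the ℓ_p regression problem on the
sum of a Vandermonde matrix and an `s`-sparse matrix is at most
`(p+1)(p(d-1)+1)·C(d,s)·s^p`. -/
theorem vandermonde_plus_sparse_lp_regression_rank (n d s p : ℕ)
    (hn : 1 ≤ n) (hs : 1 ≤ s) (hsd : s ≤ d)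
    (t : Fin n → ℝ)
    (a v σ : Fin n → (Fin d → ℝ))
    (hv : ∀ i j, v i j = t i ^ (j : ℕ))
    (hsum : ∀ i, a i = v i + σ i)
    (hσ : ∀ i, (Finset.univ.filter fun j => σ i j ≠ 0).card ≤ s) :
    ∃ (M : Fin n → Fin ((p + 1) * (p * (d - 1) + 1) * Nat.choose d s * s ^ p) → ℝ)
      (f : (Fin d → ℝ) → Fin ((p + 1) * (p * (d - 1) + 1) * Nat.choose d s * s ^ p) → ℝ),
      ∀ (i : Fin n) (x : Fin d → ℝ),
        (∑ j, a i j * x j) ^ p = ∑ kk, M i kk * f x kk := by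
  classical
  have hd : 1 ≤ d := le_trans hs hsd
  -- choose supersets of supports of card s
  have hex : ∀ i, ∃ S : Finset (Fin d), (Finset.univ.filter fun j => σ i j ≠ 0) ⊆ S ∧ S.card = s := by
    intro i
    exact Finset.exists_superset_card_eq (hσ i) (by simpa using hsd)
  choose S hS hScard using hex
  -- index type
  set ι := Fin (p+1) × Fin (p*(d-1)+1) × {T : Finset (Fin d) // T.card = s} × (Fin p → Fin s) with hι
  have hcard : Fintype.card ι = (p + 1) * (p * (d - 1) + 1) * Nat.choose d s * s ^ p := by
    simp [hι, Fintype.card_prod, Fintype.card_fun, Fintype.card_finset_len, mul_assoc]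
  have e : Fin ((p + 1) * (p * (d - 1) + 1) * Nat.choose d s * s ^ p) ≃ ι :=
    (Fintype.equivFinOfCardEq hcard).symm
  -- embedding for each card-s finset
  set emb : {T : Finset (Fin d) // T.card = s} → Fin s → Fin d :=
    fun T l => T.1.orderEmbOfFin T.2 l with hemb
  set Si : Fin n → {T : Finset (Fin d) // T.card = s} := fun i => ⟨S i, hScard i⟩ with hSi
  -- the decomposition over ι
  set M' : Fin n → ι → ℝ := fun i kk =>
    if kk.2.2.1 = Si i then
      (p.choose kk.1 : ℝ) * t i ^ (kk.2.1 : ℕ) *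
        ∏ l : Fin p, (if (l:ℕ) < p - (kk.1:ℕ) then σ i (emb kk.2.2.1 (kk.2.2.2 l)) else (s:ℝ)⁻¹)
    else 0 with hM'
  set f' : (Fin d → ℝ) → ι → ℝ := fun x kk =>
    ((∑ j : Fin d, Polynomial.C (x j) * Polynomial.X ^ (j:ℕ)) ^ (kk.1:ℕ)).coeff kk.2.1 *
      ∏ l : Fin p, (if (l:ℕ) < p - (kk.1:ℕ) then x (emb kk.2.2.1 (kk.2.2.2 l)) else 1) with hf'
  refine ⟨fun i kk => M' i (e kk), fun x kk => f' x (e kk), ?_⟩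
  intro i x
  have hre : ∑ kk, M' i (e kk) * f' x (e kk) = ∑ kk : ι, M' i kk * f' x kk :=
    Equiv.sum_comp e (fun kk => M' i kk * f' x kk)
  rw [hre]
  -- notation
  set P : Polynomial ℝ := ∑ j : Fin d, Polynomial.C (x j) * Polynomial.X ^ (j:ℕ) with hP
  set A : ℝ := ∑ j, v i j * x j with hA
  set B : ℝ := ∑ j, σ i j * x j with hB
  -- LHS = (A + B)^p
  have hsplit : (∑ j, a i j * x j) = A + B := by
    rw [hA, hB, ← Finset.sum_add_distrib]
    refine Finset.sum_congr rfl fun j _ => ?_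
    rw [hsum i]
    simp [add_mul]
  -- A^k expansion
  have hPdeg : P.natDegree ≤ d - 1 := by
    apply Polynomial.natDegree_sum_le_of_forall_le
    intro j _
    exact (Polynomial.natDegree_C_mul_X_pow_le (x j) (j:ℕ)).trans (by omega)
  have hAeval : A = P.eval (t i) := by
    rw [hA, hP]
    simp only [Polynomial.eval_finset_sum, Polynomial.eval_mul, Polynomial.eval_C,
      Polynomial.eval_pow, Polynomial.eval_X]
    refine Finset.sum_congr rfl fun j _ => ?_
    rw [hv i j]; ring
  have hAk : ∀ k : ℕ, k ≤ p →
      A ^ k = ∑ m : Fin (p*(d-1)+1), (P ^ k).coeff (m:ℕ) * t i ^ (m:ℕ) := by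
    intro k hk
    have hdeg : (P ^ k).natDegree < p * (d - 1) + 1 := by
      have h1 : (P ^ k).natDegree ≤ k * P.natDegree := Polynomial.natDegree_pow_le
      have h2 : k * P.natDegree ≤ p * (d-1) := Nat.mul_le_mul hk hPdeg
      omega
    rw [hAeval, ← Polynomial.eval_pow, Polynomial.eval_eq_sum_range' hdeg,
      Fin.sum_univ_eq_sum_range (fun m => (P ^ k).coeff m * t i ^ m)]
  -- B as a sum over Fin s
  have hBs : B = ∑ l : Fin s, σ i (emb (Si i) l) * x (emb (Si i) l) := by
    rw [hB]
    have h0 : ∀ j ∈ Finset.univ, j ∉ S i → σ i j * x j = 0 := by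
      intro j _ hj
      have : σ i j = 0 := by
        by_contra hne
        exact hj (hS i (by simp [hne]))
      simp [this]
    rw [← Finset.sum_subset (Finset.subset_univ (S i)) h0]
    have himg : S i = Finset.univ.image (emb (Si i)) := by
      ext j
      simp only [Finset.mem_image, Finset.mem_univ, true_and]
      constructor
      · intro hj
        have : j ∈ Set.range ((S i).orderEmbOfFin (hScard i)) := by
          rw [Finset.range_orderEmbOfFin]; exact hj
        obtain ⟨l, hl⟩ := this
        exact ⟨l, hl⟩
      · rintro ⟨l, rfl⟩
        exact Finset.orderEmbOfFin_mem _ _ _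
    rw [himg, Finset.sum_image (fun l _ l' _ h => ((S i).orderEmbOfFin (hScard i)).injective h)]
  -- main computation
  rw [hsplit, add_pow]
  rw [← Fin.sum_univ_eq_sum_range (fun k => A ^ k * B ^ (p - k) * (p.choose k : ℝ))]
  rw [Fintype.sum_prod_type]
  refine Finset.sum_congr rfl fun k _ => ?_
  have hk : (k:ℕ) ≤ p := by omega
  have RHSeq : (∑ y : Fin (p*(d-1)+1) × {T : Finset (Fin d) // T.card = s} × (Fin p → Fin s),
        M' i (k, y) * f' x (k, y))
      = ∑ m : Fin (p*(d-1)+1), ∑ g : Fin p → Fin s,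
          ((p.choose (k:ℕ) : ℝ) * t i ^ (m:ℕ) *
            ∏ l : Fin p, (if (l:ℕ) < p - (k:ℕ) then σ i (emb (Si i) (g l)) else (s:ℝ)⁻¹)) *
          ((P ^ (k:ℕ)).coeff (m:ℕ) *
            ∏ l : Fin p, (if (l:ℕ) < p - (k:ℕ) then x (emb (Si i) (g l)) else 1)) := by
    rw [Fintype.sum_prod_type]
    refine Finset.sum_congr rfl fun m _ => ?_
    rw [Fintype.sum_prod_type]
    rw [Finset.sum_comm]
    refine Finset.sum_congr rfl fun g _ => ?_
    simp only [hM', hf', ite_mul, zero_mul]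
    rw [Finset.sum_ite_eq' Finset.univ (Si i)]
    simp only [Finset.mem_univ, if_pos]
    try rw [← hP]
  rw [RHSeq]
  rw [hAk (k:ℕ) hk, hBs, expand_pow p (p - (k:ℕ)) s (Nat.sub_le _ _) hs
    (fun l => σ i (emb (Si i) l) * x (emb (Si i) l))]
  rw [Finset.sum_mul_sum, Finset.sum_mul]
  refine Finset.sum_congr rfl fun m _ => ?_
  rw [Finset.sum_mul]
  refine Finset.sum_congr rfl fun g _ => ?_
  have hprod : (∏ l : Fin p, (if (l:ℕ) < p - (k:ℕ) then σ i (emb (Si i) (g l)) else (s:ℝ)⁻¹)) *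
      (∏ l : Fin p, (if (l:ℕ) < p - (k:ℕ) then x (emb (Si i) (g l)) else 1)) =
      ∏ l : Fin p, (if (l:ℕ) < p - (k:ℕ) then σ i (emb (Si i) (g l)) * x (emb (Si i) (g l)) else (s:ℝ)⁻¹) := by
    rw [← Finset.prod_mul_distrib]
    refine Finset.prod_congr rfl fun l _ => ?_
    split_ifs <;> ring
  rw [← hprod]
  ring
end

section
/- Let n, d, q ≥ 1 and p ≥ 0 be integers, and for each i ∈ {1,…,n} let t_{i,1}, …, t_{i,q} ∈ ℝ. Suppose the matrix A ∈ ℝ^{n×(qd)} has rows a_i equal to the concatenation of the q Vandermonde rows (1, t_{i,l}, t_{i,l}^2, …, t_{i,l}^{d-1}) for l = 1,…,q. Then there exists a function f : ℝ^{qd} → ℝ^{(p(d-1)+1)^q}, with coordinates indexed by multi-indices κ = (κ_1,…,κ_q) with 0 ≤ κ_l ≤ p(d-1), independent of i, such that for every i and every x ∈ ℝ^{qd}, ⟨a_i, x⟩^p = ∑_{κ} (∏_{l=1}^{q} t_{i,l}^{κ_l}) · f(x)_κ. In particular, the rank of the ℓ_p regression problem on a horizontal concatenation of q Vandermonde matrices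 is at most (p(d-1)+1)^q. -/
/-- If each row `a_i ∈ ℝ^{qd}` is the concatenation of `q`
Vandermonde rows `(1, t_{i,l}, …, t_{i,l}^{d-1})`, `l = 1,…,q`, then there is a
function `f : ℝ^{qd} → ℝ^{(p(d-1)+1)^q}`, indexed by multi-indices
`κ : {1,…,q} → {0,…,p(d-1)}` and independent of `i`, such that
`⟨a_i, x⟩^p = ∑_κ (∏_l t_{i,l}^{κ_l}) · f(x)_κ`. In particular the rank of
the ℓ_p regression problem on a horizontal concatenation of `q` Vandermonde
matrices is at most `(p(d-1)+1)^q`. -/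
theorem block_vandermonde_lp_regression_rank (n d q p : ℕ)
    (hn : 1 ≤ n) (hd : 1 ≤ d) (hq : 1 ≤ q)
    (t : Fin n → Fin q → ℝ)
    (a : Fin n → (Fin q × Fin d → ℝ))
    (ha : ∀ i l j, a i (l, j) = t i l ^ (j : ℕ)) :
    ∃ f : (Fin q × Fin d → ℝ) → ((Fin q → Fin (p * (d - 1) + 1)) → ℝ),
      ∀ (i : Fin n) (x : Fin q × Fin d → ℝ),
        (∑ lj : Fin q × Fin d, a i lj * x lj) ^ p
          = ∑ κ : Fin q → Fin (p * (d - 1) + 1),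
              (∏ l : Fin q, t i l ^ ((κ l : ℕ))) * f x κ := by
  classical
  set Q : (Fin q × Fin d → ℝ) → MvPolynomial (Fin q) ℝ :=
    fun x => (∑ lj : Fin q × Fin d,
      MvPolynomial.X lj.1 ^ (lj.2 : ℕ) * MvPolynomial.C (x lj)) ^ p with hQ
  set emb : (Fin q → Fin (p * (d - 1) + 1)) → (Fin q →₀ ℕ) :=
    fun κ => Finsupp.equivFunOnFinite.symm (fun l => (κ l : ℕ)) with hemb
  have emb_inj : Function.Injective emb := by
    intro κ1 κ2 h
    funext l
    have := congrArg (fun m => m l) h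
    simpa [emb, Fin.ext_iff] using this
  refine ⟨fun x κ => MvPolynomial.coeff (emb κ) (Q x), ?_⟩
  intro i x
  have hdeg : ∀ l, (Q x).degreeOf l ≤ p * (d - 1) := by
    intro l
    refine le_trans (MvPolynomial.degreeOf_pow_le l _ p) ?_
    refine Nat.mul_le_mul_left p ?_
    refine le_trans (MvPolynomial.degreeOf_sum_le l _ _) ?_
    refine Finset.sup_le fun lj _ => ?_
    refine le_trans (MvPolynomial.degreeOf_mul_C_le _ l _) ?_
    refine le_trans (MvPolynomial.degreeOf_pow_le l _ _) ?_
    calc (lj.2 : ℕ) * (MvPolynomial.X lj.1 : MvPolynomial (Fin q) ℝ).degreeOf l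
        ≤ (lj.2 : ℕ) * 1 := by
          refine Nat.mul_le_mul_left _ ?_
          rw [MvPolynomial.degreeOf_X]
          split <;> simp
      _ ≤ d - 1 := by
          rw [Nat.mul_one]
          exact Nat.le_sub_one_of_lt lj.2.isLt
  have hL : (∑ lj : Fin q × Fin d, a i lj * x lj) ^ p
      = MvPolynomial.eval (t i) (Q x) := by
    simp only [hQ, map_pow, map_sum, map_mul, MvPolynomial.eval_X, MvPolynomial.eval_C,
      MvPolynomial.eval_pow]
    congr 1
    refine Finset.sum_congr rfl fun lj _ => ?_
    rw [ha i lj.1 lj.2]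
  rw [hL, MvPolynomial.eval_eq']
  have himg : (Q x).support ⊆ Finset.univ.image emb := by
    intro m hm
    simp only [Finset.mem_image, Finset.mem_univ, true_and]
    refine ⟨fun l => ⟨m l, ?_⟩, ?_⟩
    · exact Nat.lt_succ_of_le (le_trans (MvPolynomial.monomial_le_degreeOf l hm) (hdeg l))
    · ext l; simp [emb]
  calc ∑ m ∈ (Q x).support, MvPolynomial.coeff m (Q x) * ∏ l, t i l ^ m l
      = ∑ m ∈ (Q x).support, (∏ l, t i l ^ m l) * MvPolynomial.coeff m (Q x) :=
        Finset.sum_congr rfl fun m _ => mul_comm _ _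
    _ = ∑ m ∈ Finset.univ.image emb,
          (∏ l, t i l ^ m l) * MvPolynomial.coeff m (Q x) :=
        Finset.sum_subset himg fun m _ hm => by
          rw [MvPolynomial.notMem_support_iff.mp hm, mul_zero]
    _ = ∑ κ : Fin q → Fin (p * (d - 1) + 1),
          (∏ l : Fin q, t i l ^ ((κ l : ℕ))) * MvPolynomial.coeff (emb κ) (Q x) := by
        rw [Finset.sum_image (fun κ1 _ κ2 _ h => emb_inj h)]
        refine Finset.sum_congr rfl fun κ _ => ?_
        simp [emb]
end

section
/- Let p ≥ 1 be a real number, A ∈ ℝ^{n×d}, b ∈ ℝ^n, let x* ∈ ℝ^d be a minimizer of ‖Ax − b‖_p over x ∈ ℝ^d, and set OPT = ‖Ax* − b‖_p. Let S be a random m×n real matrix (a measurable function from a probability space to ℝ^{m×n}) such that almost surely, (11/12)·‖SAy‖_p ≤ ‖Ay‖_p ≤ (13/12)·‖SAy‖_p for all y ∈ ℝ^d, and such that E[‖S(Ax* − b)‖_p^p] = ‖Ax* − b‖_p^p. Then with probability at least 4/5, every vector x ∈ ℝ^d satisfying ‖SAx − Sb‖_p ≤ 5·OPT also satisfies ‖Ax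 − b‖_p ≤ 12·OPT. -/
open MeasureTheory
open scoped ENNReal

/-- The ℓ_p norm of a vector in ℝ^n, for real `p ≥ 1`:
`‖y‖_p = (∑ |y_i|^p)^{1/p}` (real exponents). -/
noncomputable def lpNorm {n : ℕ} (p : ℝ) (y : Fin n → ℝ) : ℝ :=
  (∑ i, |y i| ^ p) ^ (1 / p)

lemma lpNorm_nonneg' {n : ℕ} (p : ℝ) (y : Fin n → ℝ) : 0 ≤ lpNorm p y :=
  Real.rpow_nonneg
    (Finset.sum_nonneg fun i _ => Real.rpow_nonneg (abs_nonneg _) _) _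

lemma lpNorm_add_le {n : ℕ} {p : ℝ} (hp : 1 ≤ p) (u v : Fin n → ℝ) :
    lpNorm p (u + v) ≤ lpNorm p u + lpNorm p v := by
  haveI : Fact (1 ≤ ENNReal.ofReal p) := ⟨ENNReal.one_le_ofReal.mpr hp⟩
  have hp0 : (0 : ℝ) < p := lt_of_lt_of_le one_pos hp
  have hto : (ENNReal.ofReal p).toReal = p := ENNReal.toReal_ofReal hp0.le
  have key : ∀ w : Fin n → ℝ,
      lpNorm p w = ‖(WithLp.equiv (ENNReal.ofReal p) (Fin n → ℝ)).symm w‖ := by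
    intro w
    rw [PiLp.norm_eq_sum (by rw [hto]; exact hp0)]
    simp [_root_.lpNorm, hto, Real.norm_eq_abs]
  rw [key, key, key]
  exact norm_add_le ((WithLp.equiv (ENNReal.ofReal p) (Fin n → ℝ)).symm u)
    ((WithLp.equiv (ENNReal.ofReal p) (Fin n → ℝ)).symm v)

lemma lpNorm_eq_zero' {n : ℕ} {p : ℝ} (hp : 1 ≤ p) {y : Fin n → ℝ}
    (h : lpNorm p y = 0) : y = 0 := by
  haveI : Fact (1 ≤ ENNReal.ofReal p) := ⟨ENNReal.one_le_ofReal.mpr hp⟩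
  have hp0 : (0 : ℝ) < p := lt_of_lt_of_le one_pos hp
  have hto : (ENNReal.ofReal p).toReal = p := ENNReal.toReal_ofReal hp0.le
  rw [show lpNorm p y = ‖(WithLp.equiv (ENNReal.ofReal p) (Fin n → ℝ)).symm y‖ by
    rw [PiLp.norm_eq_sum (by rw [hto]; exact hp0)]
    simp [_root_.lpNorm, hto, Real.norm_eq_abs]] at h
  have h2 := norm_eq_zero.mp h
  funext i
  have := congrFun (congrArg (WithLp.equiv (ENNReal.ofReal p) (Fin n → ℝ)) h2) i
  simpa using this

lemma lpNorm_neg {n : ℕ} (p : ℝ) (y : Fin n → ℝ) :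
    lpNorm p (-y) = lpNorm p y := by
  unfold _root_.lpNorm
  congr 1
  exact Finset.sum_congr rfl fun i _ => by simp

lemma lpNorm_sub_le {n : ℕ} {p : ℝ} (hp : 1 ≤ p) (u v : Fin n → ℝ) :
    lpNorm p (u - v) ≤ lpNorm p u + lpNorm p v := by
  have := lpNorm_add_le hp u (-v)
  rwa [← sub_eq_add_neg, lpNorm_neg] at this

/-- probabilistic constant-factor transfer lemma. If `S` is a
random `m×n` matrix which almost surely satisfies the two-sided subspace
embedding `(11/12)·‖SAy‖_p ≤ ‖Ay‖_p ≤ (13/12)·‖SAy‖_p` for all `y`, and which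
is unbiased on the optimal residual, `E[‖S(Ax*−b)‖_p^p] = ‖Ax*−b‖_p^p`, then
with probability at least `4/5`, every `x` with `‖SAx − Sb‖_p ≤ 5·OPT`
satisfies `‖Ax − b‖_p ≤ 12·OPT`. -/
theorem lp_regression_constant_factor_transfer_prob
    {Ω : Type*} [MeasurableSpace Ω] (μ : Measure Ω) [IsProbabilityMeasure μ]
    (n d m : ℕ) (p : ℝ) (hp : 1 ≤ p)
    (A : Matrix (Fin n) (Fin d) ℝ) (b : Fin n → ℝ)
    (S : Ω → Matrix (Fin m) (Fin n) ℝ) (hS : Measurable fun ω i j => S ω i j)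
    (xstar : Fin d → ℝ)
    (hmin : ∀ x : Fin d → ℝ,
      lpNorm p (A.mulVec xstar - b) ≤ lpNorm p (A.mulVec x - b))
    (hemb : ∀ᵐ ω ∂μ, ∀ y : Fin d → ℝ,
      (11 / 12) * lpNorm p ((S ω * A).mulVec y) ≤ lpNorm p (A.mulVec y) ∧
      lpNorm p (A.mulVec y) ≤ (13 / 12) * lpNorm p ((S ω * A).mulVec y))
    (hunbiased : ∫ ω, (lpNorm p ((S ω).mulVec (A.mulVec xstar - b))) ^ p ∂μ
      = (lpNorm p (A.mulVec xstar - b)) ^ p) :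
    (4 / 5 : ℝ≥0∞) ≤ μ {ω | ∀ x : Fin d → ℝ,
      lpNorm p ((S ω * A).mulVec x - (S ω).mulVec b)
          ≤ 5 * lpNorm p (A.mulVec xstar - b) →
      lpNorm p (A.mulVec x - b) ≤ 12 * lpNorm p (A.mulVec xstar - b)} := by
  have hp0 : (0 : ℝ) < p := lt_of_lt_of_le one_pos hp
  set v : Fin n → ℝ := A.mulVec xstar - b with hv
  set OPT : ℝ := lpNorm p v with hOPT
  have hOPTnn : 0 ≤ OPT := lpNorm_nonneg' p v
  -- measurability
  have hmeasSv : Measurable fun ω => (S ω).mulVec v := by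
    refine measurable_pi_lambda _ fun i => ?_
    simp only [Matrix.mulVec, dotProduct]
    refine Finset.measurable_sum _ fun j _ => ?_
    have h1 : Measurable fun ω => S ω i j :=
      ((measurable_pi_apply j).comp ((measurable_pi_apply i).comp hS))
    exact h1.mul measurable_const
  have hcontlp : Continuous fun y : Fin m → ℝ => lpNorm p y := by
    unfold _root_.lpNorm
    refine (Real.continuous_rpow_const (by positivity)).comp ?_
    exact continuous_finset_sum _ fun i _ =>
      (Real.continuous_rpow_const hp0.le).comp
        (continuous_abs.comp (continuous_apply i))
  have hgm : Measurable fun ω => lpNorm p ((S ω).mulVec v) :=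
    hcontlp.measurable.comp hmeasSv
  have hfm : Measurable fun ω => (lpNorm p ((S ω).mulVec v)) ^ p :=
    (Real.continuous_rpow_const hp0.le).measurable.comp hgm
  -- the bad event
  set Bad : Set Ω := {ω | 5 * OPT < lpNorm p ((S ω).mulVec v)} with hBadDef
  have hBadSmall : μ Bad ≤ 1 / 5 := by
    rcases eq_or_lt_of_le hOPTnn with h0 | hOPTpos
    · -- OPT = 0 : v = 0, so the bad event is empty
      have hv0 : v = 0 := lpNorm_eq_zero' hp h0.symm
      have : Bad = ∅ := by
        ext ω
        simp only [hBadDef, Set.mem_setOf_eq, Set.mem_empty_iff_false, iff_false, not_lt]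
        rw [hv0, Matrix.mulVec_zero, ← h0]
        have : lpNorm p (0 : Fin m → ℝ) = 0 := by
          unfold _root_.lpNorm
          rw [Finset.sum_eq_zero fun i _ => by
            simp [Real.zero_rpow hp0.ne']]
          exact Real.zero_rpow (by positivity)
        simp [this]
      rw [this]
      simp
    · -- OPT > 0 : Markov's inequality
      have hOPTp : (0 : ℝ) < OPT ^ p := Real.rpow_pos_of_pos hOPTpos _
      have hfint : Integrable (fun ω => (lpNorm p ((S ω).mulVec v)) ^ p) μ := by
        by_contra hni
        rw [integral_undef hni] at hunbiased
        exact hOPTp.ne (by rw [hunbiased])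
      have hnn : 0 ≤ᵐ[μ] fun ω => (lpNorm p ((S ω).mulVec v)) ^ p :=
        Filter.Eventually.of_forall fun ω =>
          Real.rpow_nonneg (lpNorm_nonneg' p _) _
      have hlin : ∫⁻ ω, ENNReal.ofReal ((lpNorm p ((S ω).mulVec v)) ^ p) ∂μ
          = ENNReal.ofReal (OPT ^ p) := by
        rw [← ofReal_integral_eq_lintegral_ofReal hfint hnn, hunbiased]
      set ε : ℝ≥0∞ := ENNReal.ofReal (5 * OPT ^ p) with hεDef
      have hε0 : ε ≠ 0 := by
        simp only [hεDef, ne_eq, ENNReal.ofReal_eq_zero, not_le]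
        positivity
      have hsub : Bad ⊆ {ω | ε ≤ ENNReal.ofReal ((lpNorm p ((S ω).mulVec v)) ^ p)} := by
        intro ω hω
        simp only [hBadDef, Set.mem_setOf_eq] at hω ⊢
        refine ENNReal.ofReal_le_ofReal ?_
        have h5 : (5 : ℝ) * OPT ^ p ≤ (5 * OPT) ^ p := by
          rw [Real.mul_rpow (by norm_num) hOPTnn]
          gcongr
          calc (5 : ℝ) = 5 ^ (1 : ℝ) := (Real.rpow_one 5).symm
          _ ≤ 5 ^ p := Real.rpow_le_rpow_of_exponent_le (by norm_num) hp
        refine h5.trans ?_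
        exact Real.rpow_le_rpow (by positivity) hω.le hp0.le
      have hmark := meas_ge_le_lintegral_div
        (μ := μ) (f := fun ω => ENNReal.ofReal ((lpNorm p ((S ω).mulVec v)) ^ p))
        (hfm.ennreal_ofReal.aemeasurable) hε0 (by rw [hεDef]; exact ENNReal.ofReal_ne_top)
      have hBadle : μ Bad ≤ ENNReal.ofReal (OPT ^ p) / ε :=
        le_trans (measure_mono hsub) (by rw [← hlin]; exact hmark)
      refine hBadle.trans ?_
      rw [ENNReal.div_le_iff hε0 (by rw [hεDef]; exact ENNReal.ofReal_ne_top)]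
      rw [hεDef, ENNReal.ofReal_mul (by norm_num), ENNReal.ofReal_ofNat,
        ← mul_assoc, ENNReal.div_mul_cancel (by norm_num) (by norm_num), one_mul]
  -- the good event implies the conclusion
  set T : Set Ω := {ω | ∀ x : Fin d → ℝ,
      lpNorm p ((S ω * A).mulVec x - (S ω).mulVec b) ≤ 5 * OPT →
      lpNorm p (A.mulVec x - b) ≤ 12 * OPT} with hTDef
  set P : Ω → Prop := fun ω => ∀ y : Fin d → ℝ,
      (11 / 12) * lpNorm p ((S ω * A).mulVec y) ≤ lpNorm p (A.mulVec y) ∧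
      lpNorm p (A.mulVec y) ≤ (13 / 12) * lpNorm p ((S ω * A).mulVec y) with hPDef
  have hgood : ∀ ω, P ω → ω ∉ Bad → ω ∈ T := by
    intro ω hPω hBadω x hx
    have hSv : lpNorm p ((S ω).mulVec v) ≤ 5 * OPT := not_lt.mp hBadω
    have h1 : lpNorm p (A.mulVec x - b)
        ≤ lpNorm p (A.mulVec (x - xstar)) + OPT := by
      have heq : A.mulVec x - b = A.mulVec (x - xstar) + v := by
        rw [Matrix.mulVec_sub, hv]; abel
      rw [heq]
      exact lpNorm_add_le hp _ _
    have h2 : lpNorm p (A.mulVec (x - xstar))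
        ≤ (13 / 12) * lpNorm p ((S ω * A).mulVec (x - xstar)) := (hPω (x - xstar)).2
    have h3 : (S ω * A).mulVec (x - xstar)
        = ((S ω * A).mulVec x - (S ω).mulVec b) - (S ω).mulVec v := by
      rw [Matrix.mulVec_sub, hv, Matrix.mulVec_sub]
      simp only [← Matrix.mulVec_mulVec]
      abel
    have h4 : lpNorm p ((S ω * A).mulVec (x - xstar)) ≤ 5 * OPT + 5 * OPT := by
      rw [h3]
      exact le_trans (lpNorm_sub_le hp _ _) (add_le_add hx hSv)
    nlinarith [lpNorm_nonneg' p ((S ω * A).mulVec (x - xstar))]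
  -- measure-theoretic conclusion
  have hembμ : μ {ω | ¬ P ω} = 0 := by
    rw [← ae_iff]; exact hemb
  have hTsup : {ω | P ω} ∩ Badᶜ ⊆ T := fun ω hω => hgood ω hω.1 hω.2
  have hcompl : ({ω | P ω} ∩ Badᶜ)ᶜ = {ω | ¬ P ω} ∪ Bad := by
    rw [Set.compl_inter, compl_compl]
    congr 1
  have h1 : (1 : ℝ≥0∞) ≤ μ ({ω | P ω} ∩ Badᶜ) + μ (({ω | P ω} ∩ Badᶜ)ᶜ) := by
    rw [← measure_univ (μ := μ)]
    rw [show (Set.univ : Set Ω) = ({ω | P ω} ∩ Badᶜ) ∪ ({ω | P ω} ∩ Badᶜ)ᶜ by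
      rw [Set.union_compl_self]]
    exact measure_union_le _ _
  have h2 : μ (({ω | P ω} ∩ Badᶜ)ᶜ) ≤ 1 / 5 := by
    rw [hcompl]
    calc μ ({ω | ¬ P ω} ∪ Bad) ≤ μ {ω | ¬ P ω} + μ Bad := measure_union_le _ _
      _ ≤ 0 + 1 / 5 := add_le_add (le_of_eq hembμ) hBadSmall
      _ = 1 / 5 := by rw [zero_add]
  have h3 : (4 / 5 : ℝ≥0∞) ≤ μ ({ω | P ω} ∩ Badᶜ) := by
    have hfin : (1 / 5 : ℝ≥0∞) ≠ ∞ := by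
      simp [ENNReal.div_eq_top]
    rw [← ENNReal.add_le_add_iff_right hfin]
    calc (4 / 5 : ℝ≥0∞) + 1 / 5 = 1 := by
          rw [ENNReal.div_add_div_same, show (4 + 1 : ℝ≥0∞) = 5 by norm_num]
          exact ENNReal.div_self (by norm_num) (by norm_num)
      _ ≤ μ ({ω | P ω} ∩ Badᶜ) + μ (({ω | P ω} ∩ Badᶜ)ᶜ) := h1
      _ ≤ μ ({ω | P ω} ∩ Badᶜ) + 1 / 5 := add_le_add le_rfl h2
  exact h3.trans (measure_mono hTsup)
end

section
/- Let n ≥ 1, ε ∈ (0,1), p ≥ 1 a real number, and let b ∈ ℝ^n be a nonzero vector. Set M = max_{1≤i≤n} |b_i|, and define x ∈ ℝ^n by: x_i = 0 if b_i = 0; otherwise x_i = sgn(b_i) · (1+ε)^{⌊log_{1+ε} |b_i|⌋} unless |x_i| ≤ M/n^5, in which case x_i = 0. Then ‖b − x‖_p ≤ ε·‖b‖_p + 2·n^{1/p}·M/n^5. In particular, each nonzero entry satisfies |b_i − x_i| ≤ ε·|b_i|, and each truncated entry satisfies |b_i| ≤ (1+ε)·M/n^5 ≤ 2M/n^5. 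-/
/-- guarantee of the `RoundTrunc` procedure. With
`M = max_i |b_i|`, and `x` obtained from `b` by rounding each nonzero entry
down in magnitude to the nearest power of `1+ε` (keeping the sign), and
truncating to `0` any entry whose rounded magnitude is at most `M/n^5`,
one has `‖b − x‖_p ≤ ε·‖b‖_p + 2·n^{1/p}·M/n^5`; moreover each
non-truncated (nonzero) entry satisfies `|b_i − x_i| ≤ ε·|b_i|` and each
truncated entry satisfies `|b_i| ≤ (1+ε)·M/n^5 ≤ 2M/n^5`. -/
theorem roundTrunc_error_bound (n : ℕ) (hn : 1 ≤ n) (ε p : ℝ)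
    (hε : ε ∈ Set.Ioo (0 : ℝ) 1) (hp : 1 ≤ p)
    (b : Fin n → ℝ) (hb : b ≠ 0)
    (M : ℝ) (hM : M = ⨆ i, |b i|)
    (x : Fin n → ℝ)
    (hx : ∀ i, x i =
      if b i = 0 then 0
      else if |Real.sign (b i) * (1 + ε) ^ ⌊Real.logb (1 + ε) |b i|⌋| ≤ M / (n : ℝ) ^ 5
        then 0
        else Real.sign (b i) * (1 + ε) ^ ⌊Real.logb (1 + ε) |b i|⌋) :
    lpNorm p (b - x) ≤ ε * lpNorm p b + 2 * (n : ℝ) ^ (1 / p) * M / (n : ℝ) ^ 5 ∧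
    (∀ i, x i ≠ 0 → |b i - x i| ≤ ε * |b i|) ∧
    (∀ i, b i ≠ 0 → x i = 0 →
      |b i| ≤ (1 + ε) * M / (n : ℝ) ^ 5 ∧ |b i| ≤ 2 * M / (n : ℝ) ^ 5) := by
  obtain ⟨hε0, hε1⟩ := hε
  have hc0 : (0:ℝ) < 1 + ε := by linarith
  have hc1 : (1:ℝ) < 1 + ε := by linarith
  have hp0 : (0:ℝ) < p := by linarith
  have hnR : (0:ℝ) < (n:ℝ) := by exact_mod_cast Nat.lt_of_lt_of_le Nat.zero_lt_one hn
  have hMi : ∀ i, |b i| ≤ M := by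
    intro i
    rw [hM]
    exact le_ciSup (f := fun j => |b j|) (Finite.bddAbove_range _) i
  have hM0 : (0:ℝ) ≤ M := le_trans (abs_nonneg _) (hMi ⟨0, hn⟩)
  set T : ℝ := M / (n:ℝ) ^ 5 with hT
  have hT0 : (0:ℝ) ≤ T := by positivity
  -- properties of the rounded value
  have hround : ∀ i, b i ≠ 0 →
      |Real.sign (b i) * (1+ε) ^ ⌊Real.logb (1+ε) |b i|⌋| = (1+ε) ^ ⌊Real.logb (1+ε) |b i|⌋ ∧
      (1+ε) ^ ⌊Real.logb (1+ε) |b i|⌋ ≤ |b i| ∧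
      |b i| ≤ (1+ε) * (1+ε) ^ ⌊Real.logb (1+ε) |b i|⌋ := by
    intro i hi
    have habs : (0:ℝ) < |b i| := abs_pos.2 hi
    set k := ⌊Real.logb (1+ε) |b i|⌋ with hk
    have hz : (0:ℝ) < (1+ε) ^ k := zpow_pos hc0 k
    have hsig : |Real.sign (b i)| = 1 := by
      rcases lt_or_gt_of_ne hi with h | h
      · rw [Real.sign_of_neg h]; simp
      · rw [Real.sign_of_pos h]; simp
    refine ⟨by rw [abs_mul, hsig, one_mul, abs_of_pos hz], ?_, ?_⟩
    · have h1 : ((1+ε):ℝ) ^ ((k:ℝ)) ≤ (1+ε) ^ Real.logb (1+ε) |b i| :=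
        Real.rpow_le_rpow_of_exponent_le hc1.le (Int.floor_le _)
      rw [Real.rpow_logb hc0 hc1.ne' habs] at h1
      rwa [Real.rpow_intCast] at h1
    · have h1 : (1+ε) ^ Real.logb (1+ε) |b i| ≤ ((1+ε):ℝ) ^ ((k:ℝ)+1) :=
        Real.rpow_le_rpow_of_exponent_le hc1.le (Int.lt_floor_add_one _).le
      rw [Real.rpow_logb hc0 hc1.ne' habs] at h1
      calc |b i| ≤ ((1+ε):ℝ) ^ ((k:ℝ)+1) := h1
        _ = ((1+ε):ℝ) ^ (((k+1:ℤ)):ℝ) := by push_cast; ring_nf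
        _ = ((1+ε):ℝ) ^ (k+1:ℤ) := Real.rpow_intCast _ _
        _ = (1+ε) * (1+ε) ^ k := by rw [zpow_add_one₀ hc0.ne']; ring
  -- the truncation bound
  have htr : ∀ i, b i ≠ 0 → x i = 0 → |b i| ≤ (1+ε) * T ∧ |b i| ≤ 2 * T := by
    intro i hi hxi
    obtain ⟨he, hlo, hhi⟩ := hround i hi
    have hz : (0:ℝ) < (1+ε) ^ ⌊Real.logb (1+ε) |b i|⌋ := zpow_pos hc0 _
    have hsmall : (1+ε) ^ ⌊Real.logb (1+ε) |b i|⌋ ≤ T := by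
      by_contra hcon
      rw [hx i, if_neg hi, if_neg (by rw [he]; exact hcon)] at hxi
      have : |Real.sign (b i) * (1+ε) ^ ⌊Real.logb (1+ε) |b i|⌋| = 0 := by rw [hxi]; simp
      rw [he] at this
      exact hz.ne' this
    constructor
    · calc |b i| ≤ (1+ε) * (1+ε) ^ ⌊Real.logb (1+ε) |b i|⌋ := hhi
        _ ≤ (1+ε) * T := by nlinarith
    · calc |b i| ≤ (1+ε) * (1+ε) ^ ⌊Real.logb (1+ε) |b i|⌋ := hhi
        _ ≤ 2 * T := by nlinarith
  -- the relative error bound on non-truncated entries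
  have hnz : ∀ i, x i ≠ 0 → |b i - x i| ≤ ε * |b i| := by
    intro i hxi
    have hi : b i ≠ 0 := by
      intro h
      apply hxi
      rw [hx i, if_pos h]
    have hxr : x i = Real.sign (b i) * (1+ε) ^ ⌊Real.logb (1+ε) |b i|⌋ := by
      rw [hx i, if_neg hi]
      by_cases hcond : |Real.sign (b i) * (1+ε) ^ ⌊Real.logb (1+ε) |b i|⌋| ≤ M / (n:ℝ) ^ 5
      · exact absurd (by rw [hx i, if_neg hi, if_pos hcond]) hxi
      · rw [if_neg hcond]
    obtain ⟨he, hlo, hhi⟩ := hround i hi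
    set r := (1+ε) ^ ⌊Real.logb (1+ε) |b i|⌋ with hr
    have hz : (0:ℝ) < r := zpow_pos hc0 _
    have hbi : b i = Real.sign (b i) * |b i| := by
      rcases lt_or_gt_of_ne hi with h | h
      · rw [Real.sign_of_neg h, abs_of_neg h]; ring
      · rw [Real.sign_of_pos h, abs_of_pos h]; ring
    have hdiff : |b i - x i| = |b i| - r := by
      rw [hxr]
      nth_rewrite 1 [hbi]
      rw [← mul_sub, abs_mul]
      have hsig : |Real.sign (b i)| = 1 := by
        rcases lt_or_gt_of_ne hi with h | h
        · rw [Real.sign_of_neg h]; simp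
        · rw [Real.sign_of_pos h]; simp
      rw [hsig, one_mul, abs_of_nonneg (by linarith)]
    rw [hdiff]
    nlinarith
  -- pointwise bound
  have hpw : ∀ i, |(b - x) i| ≤ ε * |b i| + 2 * T := by
    intro i
    simp only [Pi.sub_apply]
    by_cases hxi : x i = 0
    · by_cases hi : b i = 0
      · simp [hxi, hi]; positivity
      · have := (htr i hi hxi).2
        rw [hxi, sub_zero]
        nlinarith [abs_nonneg (b i)]
    · have := hnz i hxi
      nlinarith [abs_nonneg (b i)]
  refine ⟨?_, hnz, fun i hi hxi => ⟨by rw [mul_div_assoc]; exact (htr i hi hxi).1,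
    by rw [mul_div_assoc]; exact (htr i hi hxi).2⟩⟩
  -- the norm bound
  have hsum1 : ∑ i, |(b - x) i| ^ p ≤ ∑ i, |ε * |b i| + 2 * T| ^ p := by
    apply Finset.sum_le_sum
    intro i _
    apply Real.rpow_le_rpow (abs_nonneg _) (le_trans (hpw i) (le_abs_self _)) hp0.le
  have hmink := Real.Lp_add_le (Finset.univ : Finset (Fin n))
    (fun i => ε * |b i|) (fun _ => 2 * T) hp
  have hA : (∑ i, (abs (ε * |b i|)) ^ p) ^ (1/p) = ε * lpNorm p b := by
    have : ∀ i : Fin n, (abs (ε * |b i|)) ^ p = ε ^ p * |b i| ^ p := by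
      intro i
      rw [abs_of_nonneg (by positivity), Real.mul_rpow hε0.le (abs_nonneg _)]
    rw [Finset.sum_congr rfl (fun i _ => this i), ← Finset.mul_sum,
      Real.mul_rpow (by positivity) (Finset.sum_nonneg fun i _ => by positivity),
      ← Real.rpow_mul hε0.le, mul_one_div_cancel hp0.ne', Real.rpow_one, lpNorm]
  have hB : (∑ _i : Fin n, |2 * T| ^ p) ^ (1/p) = (n:ℝ) ^ (1/p) * (2 * T) := by
    rw [Finset.sum_const, Finset.card_univ, Fintype.card_fin, nsmul_eq_mul,
      Real.mul_rpow (Nat.cast_nonneg n) (by positivity),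
      ← Real.rpow_mul (by positivity), mul_one_div_cancel hp0.ne', Real.rpow_one,
      abs_of_nonneg (by positivity)]
  calc lpNorm p (b - x) = (∑ i, |(b - x) i| ^ p) ^ (1/p) := rfl
    _ ≤ (∑ i, |ε * |b i| + 2 * T| ^ p) ^ (1/p) := by
        apply Real.rpow_le_rpow (Finset.sum_nonneg fun i _ => by positivity) hsum1
        positivity
    _ ≤ (∑ i, (abs (ε * |b i|)) ^ p) ^ (1/p) + (∑ _i : Fin n, |2 * T| ^ p) ^ (1/p) := hmink
    _ = ε * lpNorm p b + (n:ℝ) ^ (1/p) * (2 * T) := by rw [hA, hB]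
    _ = ε * lpNorm p b + 2 * (n:ℝ) ^ (1/p) * M / (n:ℝ) ^ 5 := by rw [hT]; ring
end

section
/- Let n ≥ 2, ε ∈ (0,1), and let b ∈ ℝ^n be a nonzero vector. Set M = max_{1≤i≤n} |b_i|, and define x ∈ ℝ^n by: x_i = 0 if b_i = 0; otherwise x_i = sgn(b_i) · (1+ε)^{⌊log_{1+ε} |b_i|⌋} unless |x_i| ≤ M/n^5, in which case x_i = 0. Then the set of values {x_1, …, x_n} ⊆ ℝ has cardinality at most 2·⌈5·(ln n)/ln(1+ε)⌉ + 1. In particular, the number of distinct values taken by the output of RoundTrunc is O((log n)/ε). -/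
/-- distinct-value bound for the `RoundTrunc` procedure. With
`M = max_i |b_i|`, and `x` obtained from `b` by rounding each nonzero entry
down in magnitude to the nearest power of `1+ε` (keeping the sign), and
truncating to `0` any entry whose rounded magnitude is at most `M/n^5`,
the set of values taken by `x` has cardinality at most
`2·⌈5·(ln n)/ln(1+ε)⌉ + 1 = O((log n)/ε)`. -/
theorem roundTrunc_distinct_values (n : ℕ) (hn : 2 ≤ n) (ε : ℝ)
    (hε : ε ∈ Set.Ioo (0 : ℝ) 1)
    (b : Fin n → ℝ) (hb : b ≠ 0)
    (M : ℝ) (hM : M = ⨆ i, |b i|)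
    (x : Fin n → ℝ)
    (hx : ∀ i, x i =
      if b i = 0 then 0
      else if |Real.sign (b i) * (1 + ε) ^ ⌊Real.logb (1 + ε) |b i|⌋| ≤ M / (n : ℝ) ^ 5
        then 0
        else Real.sign (b i) * (1 + ε) ^ ⌊Real.logb (1 + ε) |b i|⌋) :
    (Finset.univ.image x).card
      ≤ 2 * ⌈5 * Real.log n / Real.log (1 + ε)⌉₊ + 1 :=   by
  obtain ⟨hε0, hε1⟩ := hε
  have h1 : (1:ℝ) < 1 + ε := by linarith
  have hlogpos : 0 < Real.log (1+ε) := Real.log_pos h1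
  have hnpos : (0:ℝ) < n := by positivity
  have hn1 : (1:ℝ) ≤ n := by exact_mod_cast Nat.one_le_of_lt hn
  have hMpos : 0 < M := by
    obtain ⟨i, hi⟩ := Function.ne_iff.mp hb
    have h2 : |b i| ≤ M := by
      rw [hM]
      exact le_ciSup (Set.Finite.bddAbove (Set.finite_range fun j => |b j|)) i
    have h3 : 0 < |b i| := abs_pos.mpr hi
    linarith
  set N := ⌈5 * Real.log n / Real.log (1+ε)⌉₊ with hN
  set kmax := ⌊Real.logb (1+ε) M⌋ with hkmax
  set a := kmax - N + 1 with ha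
  set S : Finset ℝ := insert 0 (((Finset.Icc a kmax).image fun k => (1+ε)^k) ∪
    ((Finset.Icc a kmax).image fun k => -((1+ε)^k))) with hS
  have hsub : Finset.univ.image x ⊆ S := by
    intro v hv
    obtain ⟨i, _, rfl⟩ := Finset.mem_image.mp hv
    rw [hx i]
    split_ifs with h0 htr
    · exact Finset.mem_insert_self 0 _
    · exact Finset.mem_insert_self 0 _
    · set k := ⌊Real.logb (1+ε) |b i|⌋ with hk
      have hbipos : 0 < |b i| := abs_pos.mpr h0
      have hbiM : |b i| ≤ M := by
        rw [hM]
        exact le_ciSup (Set.Finite.bddAbove (Set.finite_range fun j => |b j|)) i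
      have hzpos : (0:ℝ) < (1+ε)^k := zpow_pos (by linarith) k
      have hkle : k ≤ kmax := Int.floor_le_floor
        (Real.logb_le_logb_of_le h1 hbipos hbiM)
      have hsign : Real.sign (b i) = 1 ∨ Real.sign (b i) = -1 := by
        rcases lt_or_gt_of_ne h0 with h | h
        · exact Or.inr (Real.sign_of_neg h)
        · exact Or.inl (Real.sign_of_pos h)
      have habs : |Real.sign (b i) * (1+ε)^k| = (1+ε)^k := by
        rcases hsign with hs | hs <;> rw [hs] <;> simp [abs_of_pos hzpos]
      have hgt : M / (n:ℝ)^5 < (1+ε)^k := by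
        rw [habs] at htr; linarith [not_le.mp htr]
      have hklb : a ≤ k := by
        have hMn5 : (0:ℝ) < M / (n:ℝ)^5 := by positivity
        have hlb : Real.logb (1+ε) (M / (n:ℝ)^5) < (k:ℝ) := by
          calc Real.logb (1+ε) (M / (n:ℝ)^5)
              < Real.logb (1+ε) ((1+ε)^k) := Real.logb_lt_logb h1 hMn5 hgt
            _ = k := by
                rw [Real.logb, Real.log_zpow]
                field_simp
        have hsplit : Real.logb (1+ε) (M / (n:ℝ)^5)
            = Real.logb (1+ε) M - 5 * Real.log n / Real.log (1+ε) := by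
          rw [Real.logb_div (ne_of_gt hMpos) (by positivity), Real.logb_pow]
          unfold Real.logb
          ring
        have hfloor : (kmax:ℝ) ≤ Real.logb (1+ε) M := Int.floor_le _
        have hceil : 5 * Real.log n / Real.log (1+ε) ≤ (N:ℝ) := Nat.le_ceil _
        have : (kmax:ℝ) - (N:ℝ) < (k:ℝ) := by
          rw [hsplit] at hlb; linarith
        have : kmax - (N:ℤ) < k := by exact_mod_cast this
        omega
      have hmem : k ∈ Finset.Icc a kmax := Finset.mem_Icc.mpr ⟨hklb, hkle⟩
      rcases hsign with hs | hs
      · rw [hs, one_mul]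
        exact Finset.mem_insert_of_mem (Finset.mem_union_left _
          (Finset.mem_image_of_mem _ hmem))
      · rw [hs]
        have : (-1 : ℝ) * (1+ε)^k = -((1+ε)^k) := by ring
        rw [this]
        exact Finset.mem_insert_of_mem (Finset.mem_union_right _
          (Finset.mem_image_of_mem _ hmem))
  calc (Finset.univ.image x).card ≤ S.card := Finset.card_le_card hsub
    _ ≤ _ := by
        refine le_trans (Finset.card_insert_le _ _) ?_
        have hu := Finset.card_union_le ((Finset.Icc a kmax).image fun k => (1+ε)^k)
          ((Finset.Icc a kmax).image fun k => -((1+ε)^k))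
        have h1c : ((Finset.Icc a kmax).image fun k => ((1:ℝ)+ε)^k).card ≤ N := by
          refine le_trans (Finset.card_image_le) ?_
          rw [Int.card_Icc]
          simp [ha]
        have h2c : ((Finset.Icc a kmax).image fun k => -(((1:ℝ)+ε)^k)).card ≤ N := by
          refine le_trans (Finset.card_image_le) ?_
          rw [Int.card_Icc]
          simp [ha]
        omega
end
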